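/- Let n be a positive integer, F ⊂ ℂ a field, and p₁,…,pₙ,q₁,…,qₙ fixed positive integers with p_i + q_i = N for all i = 1,…,n (for some fixed positive integer N). If the additive functions f₁,…,fₙ,g₁,…,gₙ: F → ℂ satisfy ∑_{i=1}^{n} f_i(x^{p_i}) g_i(x^{q_i}) = 0 for all x ∈ F, then (1/N!) ∑_{σ ∈ S_N} ∑_{i=1}^{n} f_i(x_{σ(1)} ⋯ x_{σ(p_i)}) · g_i(x_{σ(p_i+1)} ⋯ x_{σ(N)}) = 0 holds for all x₁,…,x_N ∈ F, where S_N denotes the symmetric group on N elements. -/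

import Mathlib

open Finset

lemma aux_sum_piFinset {α β γ : Type*} [Fintype α] [DecidableEq α] [DecidableEq β] [AddCommMonoid γ]
    (S : Finset β) (u : (α → β) → γ) :
    ∑ a ∈ Fintype.piFinset (fun _ : α => S), u a = ∑ b : α → ↥S, u (fun t => ↑(b t)) := by
  refine Finset.sum_bij' (fun a ha => fun t => (⟨a t, Fintype.mem_piFinset.1 ha t⟩ : ↥S))
    (fun b _ => fun t => ↑(b t)) ?_ ?_ ?_ ?_ ?_
  · intros; exact mem_univ _
  · intro b _; exact Fintype.mem_piFinset.2 fun t => (b t).2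
  · intro a ha; rfl
  · intro b hb; rfl
  · intro a ha; rfl

lemma aux_ie {α : Type*} [Fintype α] [DecidableEq α] (T : Finset α) :
    (∑ S ∈ (univ : Finset α).powerset,
      if T ⊆ S then ((-1:ℂ))^(Fintype.card α - S.card) else 0)
      = if T = univ then 1 else 0 := by
  classical
  rw [Finset.sum_ite, Finset.sum_const_zero, add_zero]
  have hbij : ∑ S ∈ (univ.powerset.filter (fun S => T ⊆ S)),
      ((-1:ℂ))^(Fintype.card α - S.card)
      = ∑ R ∈ Tᶜ.powerset, ((-1:ℂ))^(Fintype.card α - T.card - R.card) := by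
    refine Finset.sum_bij' (fun S _ => S \ T) (fun R _ => R ∪ T) ?_ ?_ ?_ ?_ ?_
    · intro S hS
      simp only [mem_filter, mem_powerset] at hS
      exact mem_powerset.2 (fun a ha => by
        simp only [mem_sdiff] at ha
        simp [mem_compl, ha.2])
    · intro R hR
      simp only [mem_powerset] at hR
      refine mem_filter.2 ⟨mem_powerset.2 (subset_univ _), subset_union_right⟩
    · intro S hS
      simp only [mem_filter, mem_powerset] at hS
      exact Finset.sdiff_union_of_subset hS.2
    · intro R hR
      simp only [mem_powerset] at hR
      refine Finset.union_sdiff_cancel_right ?_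
      exact Finset.disjoint_left.2 fun a haR haT => by
        have := hR haR; simp [mem_compl] at this; exact this haT
    · intro S hS
      simp only [mem_filter, mem_powerset] at hS
      congr 1
      have h1 : #T ≤ #S := Finset.card_le_card hS.2
      have h2 : #S ≤ Fintype.card α := by
        simpa using Finset.card_le_card hS.1
      rw [Finset.card_sdiff_of_subset hS.2]
      omega
  rw [hbij]
  have hle : ∀ R ∈ Tᶜ.powerset, R.card ≤ Fintype.card α - T.card := by
    intro R hR
    have := Finset.card_le_card (mem_powerset.1 hR)
    rw [Finset.card_compl] at this
    omega
  have : ∀ R ∈ Tᶜ.powerset, ((-1:ℂ))^(Fintype.card α - T.card - R.card)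
      = ((-1:ℂ))^(Fintype.card α - T.card) * ((-1:ℂ))^(R.card) := by
    intro R hR
    have h1 : ((-1:ℂ))^(Fintype.card α - T.card - R.card) * ((-1:ℂ))^(R.card)
        = ((-1:ℂ))^(Fintype.card α - T.card) := by
      rw [← pow_add]; congr 1; have := hle R hR; omega
    have h2 : ((-1:ℂ))^(R.card) * ((-1:ℂ))^(R.card) = 1 := by
      rw [← mul_pow]; norm_num
    calc ((-1:ℂ))^(Fintype.card α - T.card - R.card)
        = ((-1:ℂ))^(Fintype.card α - T.card - R.card) * (((-1:ℂ))^(R.card) * ((-1:ℂ))^(R.card)) := by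
          rw [h2, mul_one]
      _ = ((-1:ℂ))^(Fintype.card α - T.card) * ((-1:ℂ))^(R.card) := by
          rw [← mul_assoc, h1]
  have hz : ∑ i ∈ Tᶜ.powerset, ((-1:ℂ))^(i.card) = if Tᶜ = ∅ then 1 else 0 := by
    have hz0 := Finset.sum_powerset_neg_one_pow_card (α := α) (x := Tᶜ)
    have := congrArg (Int.cast : ℤ → ℂ) hz0
    push_cast at this
    simpa using this
  rw [Finset.sum_congr rfl this, ← Finset.mul_sum, hz]
  by_cases h : Tᶜ = ∅
  · have hT : T = univ := by
      rwa [← Finset.compl_eq_empty_iff]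
    have : Fintype.card α - T.card = 0 := by
      rw [hT, Finset.card_univ]; omega
    simp [h, hT, this]
  · have hT : T ≠ univ := fun hh => h (by simp [hh])
    simp [h, hT]

open Finset

lemma aux_expand (F : Subfield ℂ) (N : ℕ) (pi qi : ℕ) (hpi : 0 < pi) (hqi : 0 < qi)
    (hpq : pi + qi = N) (fi gi : F → ℂ)
    (hf : ∀ a b : F, fi (a + b) = fi a + fi b)
    (hg : ∀ a b : F, gi (a + b) = gi a + gi b)
    (x : Fin N → F) (S : Finset (Fin N)) :
    ∑ b : Fin N → ↥S,
      fi (∏ t ∈ Finset.univ.filter (fun t : Fin N => (t : ℕ) < pi), x ↑(b t)) *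
      gi (∏ t ∈ Finset.univ.filter (fun t : Fin N => pi ≤ (t : ℕ)), x ↑(b t))
    = fi ((∑ j ∈ S, x j) ^ pi) * gi ((∑ j ∈ S, x j) ^ qi) := by
  classical
  have hpiN : pi < N := by omega
  set P : Fin N → Prop := fun t => (t : ℕ) < pi with hP
  have hcard1 : Fintype.card {t : Fin N // P t} = pi := by
    rw [Fintype.card_subtype]
    have : Finset.univ.filter P = Finset.Iio (⟨pi, hpiN⟩ : Fin N) := by
      ext t; simp [hP, Fin.lt_def]
    rw [this, Fin.card_Iio]
  have hcard2 : Fintype.card {t : Fin N // ¬ P t} = qi := by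
    rw [Fintype.card_subtype]
    have : Finset.univ.filter (fun t => ¬ P t) = Finset.Ici (⟨pi, hpiN⟩ : Fin N) := by
      ext t; simp [hP, Fin.le_def, not_lt]
    rw [this, Fin.card_Ici]
    simp only [Fin.val_mk]
    omega
  set y : F := ∑ j ∈ S, x j with hy
  have hysub : y = ∑ j : ↥S, x ↑j := (Finset.sum_coe_sort S x).symm
  let f' : F →+ ℂ := AddMonoidHom.mk' fi hf
  let g' : F →+ ℂ := AddMonoidHom.mk' gi hg
  have h1 : y ^ pi = ∑ b1 : {t : Fin N // P t} → ↥S, ∏ t, x ↑(b1 t) := by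
    calc y ^ pi = ∏ _t : {t : Fin N // P t}, (∑ j : ↥S, x ↑j) := by
          rw [Finset.prod_const, Finset.card_univ, hcard1, hysub]
      _ = ∑ b1 ∈ Fintype.piFinset (fun _ : {t : Fin N // P t} => (univ : Finset ↥S)),
            ∏ t, x ↑(b1 t) :=
          Finset.prod_univ_sum (fun _ : {t : Fin N // P t} => (univ : Finset ↥S))
            (fun _ j => x ↑j)
      _ = ∑ b1 : {t : Fin N // P t} → ↥S, ∏ t, x ↑(b1 t) := by
          rw [Fintype.piFinset_univ]
  have h2 : y ^ qi = ∑ b2 : {t : Fin N // ¬ P t} → ↥S, ∏ t, x ↑(b2 t) := by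
    calc y ^ qi = ∏ _t : {t : Fin N // ¬ P t}, (∑ j : ↥S, x ↑j) := by
          rw [Finset.prod_const, Finset.card_univ, hcard2, hysub]
      _ = ∑ b2 ∈ Fintype.piFinset (fun _ : {t : Fin N // ¬ P t} => (univ : Finset ↥S)),
            ∏ t, x ↑(b2 t) :=
          Finset.prod_univ_sum (fun _ : {t : Fin N // ¬ P t} => (univ : Finset ↥S))
            (fun _ j => x ↑j)
      _ = ∑ b2 : {t : Fin N // ¬ P t} → ↥S, ∏ t, x ↑(b2 t) := by
          rw [Fintype.piFinset_univ]
  have hfy : fi (y ^ pi) = ∑ b1 : {t : Fin N // P t} → ↥S, fi (∏ t, x ↑(b1 t)) := by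
    rw [h1]; exact map_sum f' _ _
  have hgy : gi (y ^ qi) = ∑ b2 : {t : Fin N // ¬ P t} → ↥S, gi (∏ t, x ↑(b2 t)) := by
    rw [h2]; exact map_sum g' _ _
  rw [hfy, hgy, Finset.sum_mul_sum]
  rw [← Fintype.sum_prod_type']
  refine Fintype.sum_equiv (Equiv.piEquivPiSubtypeProd P (fun _ => ↥S)) _ _ ?_
  intro b
  have e1 : ∏ t ∈ Finset.univ.filter (fun t : Fin N => (t : ℕ) < pi), x ↑(b t)
      = ∏ t : {t : Fin N // P t}, x ↑(b ↑t) := by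
    refine Finset.prod_subtype _ (fun t => by simp [hP]) _
  have e2 : ∏ t ∈ Finset.univ.filter (fun t : Fin N => pi ≤ (t : ℕ)), x ↑(b t)
      = ∏ t : {t : Fin N // ¬ P t}, x ↑(b ↑t) := by
    refine Finset.prod_subtype _ (fun t => by simp [hP, not_lt]) _
  rw [e1, e2]
  rfl
open Finset



/-- **Symmetrization lemma.**
Let `n` be a positive integer, `F ⊂ ℂ` a field, and `p₁,…,pₙ,q₁,…,qₙ` positive integers
with `p i + q i = N` for all `i`.  If the additive functions `f₁,…,fₙ,g₁,…,gₙ : F → ℂ`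
satisfy `∑ i, f i (x ^ p i) * g i (x ^ q i) = 0` for all `x ∈ F`, then
`(1/N!) ∑_{σ ∈ S_N} ∑ i, f i (x_{σ 1} ⋯ x_{σ (p i)}) * g i (x_{σ (p i + 1)} ⋯ x_{σ N}) = 0`
for all `x₁,…,x_N ∈ F`. -/
theorem symmetrization
    (n : ℕ) (hn : 0 < n) (F : Subfield ℂ) (N : ℕ) (hN : 0 < N)
    (p q : Fin n → ℕ) (hp : ∀ i, 0 < p i) (hq : ∀ i, 0 < q i)
    (hpq : ∀ i, p i + q i = N)
    (f g : Fin n → F → ℂ)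
    (hfadd : ∀ i, ∀ x y : F, f i (x + y) = f i x + f i y)
    (hgadd : ∀ i, ∀ x y : F, g i (x + y) = g i x + g i y)
    (heq : ∀ x : F, ∑ i, f i (x ^ p i) * g i (x ^ q i) = 0) :
    ∀ x : Fin N → F,
      (1 / (N.factorial : ℂ)) *
        ∑ σ : Equiv.Perm (Fin N), ∑ i,
          f i (∏ t ∈ Finset.univ.filter (fun t : Fin N => (t : ℕ) < p i), x (σ t)) *
          g i (∏ t ∈ Finset.univ.filter (fun t : Fin N => p i ≤ (t : ℕ)), x (σ t)) = 0 := by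

  intro x
  classical
  set v : (Fin N → Fin N) → ℂ := fun a => ∑ i,
      f i (∏ t ∈ Finset.univ.filter (fun t : Fin N => (t : ℕ) < p i), x (a t)) *
      g i (∏ t ∈ Finset.univ.filter (fun t : Fin N => p i ≤ (t : ℕ)), x (a t)) with hv
  -- Step 1: each piFinset-sum vanishes
  have h0 : ∀ S : Finset (Fin N), ∑ a ∈ Fintype.piFinset (fun _ : Fin N => S), v a = 0 := by
    intro S
    rw [aux_sum_piFinset S v]
    have : ∑ b : Fin N → ↥S, v (fun t => ↑(b t))
        = ∑ i, f i ((∑ j ∈ S, x j) ^ p i) * g i ((∑ j ∈ S, x j) ^ q i) := by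
      rw [hv]
      rw [Finset.sum_comm]
      refine Finset.sum_congr rfl fun i _ => ?_
      exact aux_expand F N (p i) (q i) (hp i) (hq i) (hpq i) (f i) (g i)
        (hfadd i) (hgadd i) x S
    rw [this, heq]
  -- Step 2: inclusion-exclusion
  have key : ∑ σ : Equiv.Perm (Fin N), v ⇑σ = 0 := by
    have hIE : ∑ S ∈ (univ : Finset (Fin N)).powerset,
        (-1:ℂ)^(N - S.card) * ∑ a ∈ Fintype.piFinset (fun _ : Fin N => S), v a
        = ∑ σ : Equiv.Perm (Fin N), v ⇑σ := by
      have step1 : ∀ S : Finset (Fin N),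
          (-1:ℂ)^(N - S.card) * ∑ a ∈ Fintype.piFinset (fun _ : Fin N => S), v a
          = ∑ a : Fin N → Fin N,
              (if Finset.image a univ ⊆ S then (-1:ℂ)^(N - S.card) else 0) * v a := by
        intro S
        have hpi : Fintype.piFinset (fun _ : Fin N => S)
            = univ.filter (fun a : Fin N → Fin N => Finset.image a univ ⊆ S) := by
          ext a
          simp [Fintype.mem_piFinset, Finset.image_subset_iff]
        rw [hpi, Finset.mul_sum, Finset.sum_filter]
        refine Finset.sum_congr rfl fun a _ => ?_
        split_ifs <;> ring
      rw [Finset.sum_congr rfl fun S _ => step1 S, Finset.sum_comm]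
      have step2 : ∀ a : Fin N → Fin N,
          ∑ S ∈ (univ : Finset (Fin N)).powerset,
            (if Finset.image a univ ⊆ S then (-1:ℂ)^(N - S.card) else 0) * v a
          = (if Finset.image a univ = univ then 1 else 0) * v a := by
        intro a
        rw [← Finset.sum_mul]
        congr 1
        have := aux_ie (Finset.image a univ)
        rwa [Fintype.card_fin] at this
      rw [Finset.sum_congr rfl fun a _ => step2 a]
      have step3 : ∑ a : Fin N → Fin N,
          (if Finset.image a univ = univ then 1 else 0) * v a
          = ∑ a ∈ univ.filter (fun a : Fin N → Fin N => Finset.image a univ = univ), v a := by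
        rw [Finset.sum_filter]
        refine Finset.sum_congr rfl fun a _ => ?_
        split_ifs <;> ring
      rw [step3]
      -- bijection with permutations
      refine (Finset.sum_bij (fun (σ : Equiv.Perm (Fin N)) _ => ⇑σ) ?_ ?_ ?_ ?_).symm
      · intro σ _
        refine Finset.mem_filter.2 ⟨mem_univ _, ?_⟩
        ext t
        simp only [Finset.mem_image, mem_univ, iff_true]
        exact ⟨σ.symm t, by trivial, σ.apply_symm_apply t⟩
      · intro σ1 _ σ2 _ h
        exact Equiv.coe_fn_injective h
      · intro a ha
        have hsurj : Function.Surjective a := by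
          intro t
          have : t ∈ Finset.image a univ := by
            rw [(Finset.mem_filter.1 ha).2]; exact mem_univ t
          obtain ⟨s, _, hs⟩ := Finset.mem_image.1 this
          exact ⟨s, hs⟩
        have hbij : Function.Bijective a := Finite.surjective_iff_bijective.1 hsurj
        exact ⟨Equiv.ofBijective a hbij, by simp, rfl⟩
      · intro σ _
        rfl
    rw [← hIE, Finset.sum_congr rfl fun S _ => by rw [h0 S]]
    simp
  rw [key, mul_zero]
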